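/- Let F be the family consisting of all k-element subsets of [n] containing [t], together with all k-element subsets of [n] containing {2,…,t+ℓ-2} but not containing 1. Then for any ℓ distinct members F₁,…,F_ℓ of F, ∑_{1≤i<j≤ℓ} |F_i ∩ F_j| ≥ binomial(ℓ,2)·(t-1) + binomial(ℓ-1,2). -/
import Mathlib


open Finset

lemma aux_pair_split {m : ℕ} (c : Fin m → Fin m → ℕ) (hc : ∀ i j, c i j = c j i) :
    2 * (∑ i : Fin m, ∑ j : Fin m, if i < j then c i j else 0) =
      ∑ i : Fin m, ∑ j : Fin m, if i ≠ j then c i j else 0 := by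
  have h1 : (∑ i : Fin m, ∑ j : Fin m, if i < j then c i j else 0) =
      ∑ i : Fin m, ∑ j : Fin m, if j < i then c i j else 0 := by
    rw [Finset.sum_comm]
    exact Finset.sum_congr rfl fun i _ => Finset.sum_congr rfl fun j _ => by
      by_cases h : j < i <;> simp [h, hc i j]
  rw [two_mul]
  nth_rewrite 2 [h1]
  rw [← Finset.sum_add_distrib]
  refine Finset.sum_congr rfl fun i _ => ?_
  rw [← Finset.sum_add_distrib]
  refine Finset.sum_congr rfl fun j _ => ?_
  rcases lt_trichotomy i j with h | h | h
  · simp [h, h.ne, asymm h]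
  · subst h; simp
  · simp [h, h.ne', asymm h]

lemma aux_sq {m : ℕ} (f : Fin m → ℕ) (hf : ∀ i, f i * f i = f i) :
    (∑ i : Fin m, ∑ j : Fin m, if i ≠ j then f i * f j else 0) + ∑ i, f i =
      (∑ i, f i) * (∑ i, f i) := by
  rw [Finset.sum_mul_sum, ← Finset.sum_add_distrib]
  refine Finset.sum_congr rfl fun i _ => ?_
  have h : f i = ∑ j : Fin m, if i = j then f i * f j else 0 := by
    rw [Finset.sum_ite_eq]
    simp [hf]
  nth_rewrite 2 [h]
  rw [← Finset.sum_add_distrib]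
  refine Finset.sum_congr rfl fun j _ => ?_
  by_cases h : i = j <;> simp [h]

lemma two_choose_two (n : ℕ) : 2 * n.choose 2 = n * (n - 1) := by
  rcases n with _ | m
  · simp
  · rw [Nat.choose_two_right]
    simp only [Nat.succ_sub_one]
    have he : Even ((m + 1) * m) := by rw [mul_comm]; exact Nat.even_mul_succ_self m
    exact Nat.mul_div_cancel' he.two_dvd

set_option maxHeartbeats 800000 in
lemma key_arith (v P Q A B : ℕ) (hAe : A + P = P * P) (hBe : B + Q = Q * Q)
    (hPQ : v + 3 ≤ P + Q) :
    (v + 2) * (v + 1) ≤ A + (v + 1) * B := by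
  rcases le_or_gt Q 1 with hq1 | hq2
  · obtain ⟨d, hd⟩ : ∃ d, P = v + 2 + d := ⟨P - (v + 2), by omega⟩
    rw [hd] at hAe
    nlinarith [hAe, Nat.zero_le (d * d), Nat.zero_le (d * v), Nat.zero_le B]
  · obtain ⟨w, hwq⟩ : ∃ w, Q = w + 2 := ⟨Q - 2, by omega⟩
    rw [hwq] at hBe
    rcases le_or_gt v (w * w + 3 * w) with hw | hw
    · have hB2 : (v + 1) * (B + (w + 2)) = (v + 1) * ((w + 2) * (w + 2)) := by
        rw [hBe]
      have hw2 : (v + 1) * v ≤ (v + 1) * (w * w + 3 * w) :=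
        Nat.mul_le_mul_left _ hw
      nlinarith [hB2, hw2, Nat.zero_le A]
    · have hwv : w ≤ v := by nlinarith
      obtain ⟨m, rfl⟩ : ∃ m, v = w + m := ⟨v - w, by omega⟩
      obtain ⟨c, hc⟩ : ∃ c, P = m + 1 + c := ⟨P - (m + 1), by omega⟩
      rw [hc] at hAe
      have hB2 : (w + m + 1) * (B + (w + 2)) = (w + m + 1) * ((w + 2) * (w + 2)) := by
        rw [hBe]
      nlinarith [hAe, hB2, Nat.zero_le (m * (w * w + w)), Nat.zero_le (m * c),
        Nat.zero_le (c * c + c), Nat.zero_le ((w + 1) * (w * w + 2 * w))]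

set_option maxHeartbeats 800000 in
theorem stmt_3 (n k t ℓ : ℕ) (ht : 1 ≤ t) (hℓ : 3 ≤ ℓ) (hk : t + ℓ - 2 ≤ k)
    (hkn : k ≤ n)
    (F : Finset (Finset ℕ))
    (hF : F = ((Finset.Icc 1 n).powersetCard k).filter
        (fun A => Finset.Icc 1 t ⊆ A) ∪
      ((Finset.Icc 1 n).powersetCard k).filter
        (fun A => Finset.Icc 2 (t + ℓ - 2) ⊆ A ∧ 1 ∉ A))
    (G : Fin ℓ → Finset ℕ) (hGinj : Function.Injective G)
    (hGmem : ∀ i, G i ∈ F) :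
    Nat.choose ℓ 2 * (t - 1) + Nat.choose (ℓ - 1) 2 ≤
      ∑ i : Fin ℓ, ∑ j : Fin ℓ, if i < j then (G i ∩ G j).card else 0 := by
  subst hF
  have hG1 : ∀ i, 1 ∈ G i ∨ Finset.Icc 2 (t + ℓ - 2) ⊆ G i := by
    intro i
    have h := hGmem i
    simp only [Finset.mem_union, Finset.mem_filter] at h
    rcases h with ⟨_, h⟩ | ⟨_, h, _⟩
    · exact Or.inl (h (Finset.mem_Icc.mpr ⟨le_refl 1, ht⟩))
    · exact Or.inr h
  have hG2 : ∀ i, Finset.Icc 2 t ⊆ G i := by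
    intro i
    have h := hGmem i
    simp only [Finset.mem_union, Finset.mem_filter] at h
    rcases h with ⟨_, h⟩ | ⟨_, h, _⟩
    · exact (Finset.Icc_subset_Icc (by omega) le_rfl).trans h
    · exact (Finset.Icc_subset_Icc le_rfl (by omega)).trans h
  set p : Fin ℓ → ℕ := fun i => if 1 ∈ G i then 1 else 0 with hp
  set q : Fin ℓ → ℕ := fun i => if Finset.Icc 2 (t + ℓ - 2) ⊆ G i then 1 else 0 with hq
  have hpq : ∀ i, 1 ≤ p i + q i := by
    intro i; rcases hG1 i with h | h <;> simp [hp, hq, h]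
  have hpval : ∀ i j : Fin ℓ, p i * p j = if 1 ∈ G i ∧ 1 ∈ G j then 1 else 0 := by
    intro i j
    by_cases hi : 1 ∈ G i <;> by_cases hj : 1 ∈ G j <;> simp [hp, hi, hj]
  have hqval : ∀ i j : Fin ℓ, q i * q j =
      if Finset.Icc 2 (t + ℓ - 2) ⊆ G i ∧ Finset.Icc 2 (t + ℓ - 2) ⊆ G j then 1 else 0 := by
    intro i j
    by_cases hi : Finset.Icc 2 (t + ℓ - 2) ⊆ G i <;>
      by_cases hj : Finset.Icc 2 (t + ℓ - 2) ⊆ G j <;> simp [hq, hi, hj]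
  have hbound : ∀ i j : Fin ℓ,
      (t - 1) + p i * p j + (ℓ - 2) * (q i * q j) ≤ (G i ∩ G j).card := by
    intro i j
    rw [hpval, hqval]
    by_cases hA : 1 ∈ G i ∧ 1 ∈ G j <;>
      by_cases hB : Finset.Icc 2 (t + ℓ - 2) ⊆ G i ∧ Finset.Icc 2 (t + ℓ - 2) ⊆ G j
    · have hsub : Finset.Icc 1 (t + ℓ - 2) ⊆ G i ∩ G j := by
        intro x hx
        rw [Finset.mem_Icc] at hx
        by_cases hx1 : x = 1
        · subst hx1; exact Finset.mem_inter.mpr ⟨hA.1, hA.2⟩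
        · have hx2 : x ∈ Finset.Icc 2 (t + ℓ - 2) := Finset.mem_Icc.mpr ⟨by omega, hx.2⟩
          exact Finset.mem_inter.mpr ⟨hB.1 hx2, hB.2 hx2⟩
      have := Finset.card_le_card hsub
      rw [Nat.card_Icc] at this
      rw [if_pos hA, if_pos hB, mul_one]
      omega
    · have hsub : Finset.Icc 1 t ⊆ G i ∩ G j := by
        intro x hx
        rw [Finset.mem_Icc] at hx
        by_cases hx1 : x = 1
        · subst hx1; exact Finset.mem_inter.mpr ⟨hA.1, hA.2⟩
        · have hx2 : x ∈ Finset.Icc 2 t := Finset.mem_Icc.mpr ⟨by omega, hx.2⟩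
          exact Finset.mem_inter.mpr ⟨hG2 i hx2, hG2 j hx2⟩
      have := Finset.card_le_card hsub
      rw [Nat.card_Icc] at this
      rw [if_pos hA, if_neg hB, mul_zero]
      omega
    · have hsub : Finset.Icc 2 (t + ℓ - 2) ⊆ G i ∩ G j :=
        Finset.subset_inter hB.1 hB.2
      have := Finset.card_le_card hsub
      rw [Nat.card_Icc] at this
      rw [if_neg hA, if_pos hB, mul_one]
      omega
    · have hsub : Finset.Icc 2 t ⊆ G i ∩ G j :=
        Finset.subset_inter (hG2 i) (hG2 j)
      have := Finset.card_le_card hsub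
      rw [Nat.card_Icc] at this
      rw [if_neg hA, if_neg hB, mul_zero]
      omega
  -- double the goal
  suffices h2goal : 2 * (Nat.choose ℓ 2 * (t - 1) + Nat.choose (ℓ - 1) 2) ≤
      2 * ∑ i : Fin ℓ, ∑ j : Fin ℓ, if i < j then (G i ∩ G j).card else 0 by omega
  have hdouble : 2 * (∑ i : Fin ℓ, ∑ j : Fin ℓ, if i < j then (G i ∩ G j).card else 0) =
      ∑ i : Fin ℓ, ∑ j : Fin ℓ, if i ≠ j then (G i ∩ G j).card else 0 :=
    aux_pair_split _ (fun i j => by rw [Finset.inter_comm])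
  rw [hdouble]
  have hle : (∑ i : Fin ℓ, ∑ j : Fin ℓ,
        if i ≠ j then (t - 1) + p i * p j + (ℓ - 2) * (q i * q j) else 0) ≤
      ∑ i : Fin ℓ, ∑ j : Fin ℓ, if i ≠ j then (G i ∩ G j).card else 0 := by
    refine Finset.sum_le_sum fun i _ => Finset.sum_le_sum fun j _ => ?_
    by_cases h : i = j
    · simp [h]
    · simp only [h, ne_eq, not_false_eq_true, if_true]
      exact hbound i j
  refine le_trans ?_ hle
  have hsplit : ∀ i j : Fin ℓ,
      (if i ≠ j then (t - 1) + p i * p j + (ℓ - 2) * (q i * q j) else 0) =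
        (t - 1) * (if i ≠ j then 1 else 0) + (if i ≠ j then p i * p j else 0) +
          (ℓ - 2) * (if i ≠ j then q i * q j else 0) := by
    intro i j; split_ifs <;> ring
  simp_rw [hsplit, Finset.sum_add_distrib, ← Finset.mul_sum]
  set N := ∑ i : Fin ℓ, ∑ j : Fin ℓ, if i ≠ j then (1 : ℕ) else 0 with hN
  set A := ∑ i : Fin ℓ, ∑ j : Fin ℓ, if i ≠ j then p i * p j else 0 with hA
  set B := ∑ i : Fin ℓ, ∑ j : Fin ℓ, if i ≠ j then q i * q j else 0 with hB
  set P := ∑ i : Fin ℓ, p i with hP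
  set Q := ∑ i : Fin ℓ, q i with hQ
  have hNe : N + ℓ = ℓ * ℓ := by
    have h := aux_sq (fun _ : Fin ℓ => (1 : ℕ)) (fun i => by simp)
    simp only [one_mul, Finset.sum_const, Finset.card_univ, Fintype.card_fin,
      smul_eq_mul, mul_one] at h
    exact h
  have hAe : A + P = P * P := aux_sq p (fun i => by by_cases h : 1 ∈ G i <;> simp [hp, h])
  have hBe : B + Q = Q * Q := aux_sq q
    (fun i => by by_cases h : Finset.Icc 2 (t + ℓ - 2) ⊆ G i <;> simp [hq, h])
  have hPle : P ≤ ℓ := by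
    calc P ≤ ∑ _i : Fin ℓ, 1 := Finset.sum_le_sum fun i _ => by
            by_cases h : 1 ∈ G i <;> simp [hp, h]
      _ = ℓ := by simp
  have hQle : Q ≤ ℓ := by
    calc Q ≤ ∑ _i : Fin ℓ, 1 := Finset.sum_le_sum fun i _ => by
            by_cases h : Finset.Icc 2 (t + ℓ - 2) ⊆ G i <;> simp [hq, h]
      _ = ℓ := by simp
  have hPQ : ℓ ≤ P + Q := by
    calc ℓ = ∑ _i : Fin ℓ, 1 := by simp
      _ ≤ ∑ i : Fin ℓ, (p i + q i) := Finset.sum_le_sum fun i _ => hpq i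
      _ = P + Q := Finset.sum_add_distrib
  have hc1 : 2 * Nat.choose ℓ 2 = ℓ * (ℓ - 1) := two_choose_two ℓ
  have hc2 : 2 * Nat.choose (ℓ - 1) 2 = (ℓ - 1) * (ℓ - 1 - 1) := two_choose_two (ℓ - 1)
  -- final arithmetic
  clear_value N A B P Q
  clear hbound hle hsplit hG1 hG2 hGmem hpval hqval hpq hdouble hN hA hB hP hQ hp hq hGinj
  obtain ⟨v, rfl⟩ : ∃ v, ℓ = v + 3 := ⟨ℓ - 3, by omega⟩
  obtain ⟨u, rfl⟩ : ∃ u, t = u + 1 := ⟨t - 1, by omega⟩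
  have key : (v + 2) * (v + 1) ≤ A + (v + 1) * B :=
    key_arith v P Q A B hAe hBe hPQ
  have e1 : v + 3 - 1 = v + 2 := by omega
  have e2 : v + 3 - 2 = v + 1 := by omega
  have e3 : v + 2 - 1 = v + 1 := by omega
  have e4 : u + 1 - 1 = u := by omega
  rw [e1, e2, e4]
  rw [e1, e3] at hc2
  rw [e1] at hc1
  have hNval : N = (v + 3) * (v + 2) := by nlinarith [hNe]
  rw [hNval]
  have hu : u * (2 * Nat.choose (v + 3) 2) = u * ((v + 3) * (v + 2)) := by rw [hc1]
  nlinarith [key, hc2, hu]
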